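/- arXiv:2312.00913 — 9 statements merged into one kernel-verified Lean document; each statement's English description precedes it below -/
import Mathlib

section
/- Let M be a matroid on ground set E and ê ∈ E an element that is neither a loop nor a coloop. Then T̂_M = (1 + s·t_ê)·T̂_{M∖ê} + (1 + r·t_ê)·T̂_{M/ê}. -/
open Finset MvPolynomial

/-- A matroid on a finite ground set `E`, presented by its rank function. -/
structure FinMatroid (α : Type) [DecidableEq α] where
  E : Finset α
  rk : Finset α → ℕ
  rk_empty : rk ∅ = 0
  rk_le_card : ∀ S : Finset α, rk S ≤ S.card
  rk_mono : ∀ ⦃S T : Finset α⦄, S ⊆ T → rk S ≤ rk T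
  rk_submodular : ∀ S T : Finset α, rk (S ∪ T) + rk (S ∩ T) ≤ rk S + rk T

namespace FinMatroid

variable {α : Type} [DecidableEq α]

/-- The equivariant Tutte polynomial of `M`, evaluated at `x y r s : R` and `t : α → R`. -/
def eqTutte (M : FinMatroid α) {R : Type} [CommRing R] (x y r s : R) (t : α → R) : R :=
  ∑ S ∈ M.E.powerset,
    (x - 1) ^ (M.rk M.E - M.rk S) * (y - 1) ^ (S.card - M.rk S) *
      (∏ e ∈ S, (1 + r * t e)) * (∏ e ∈ M.E \ S, (1 + s * t e))

/-- The classical Tutte polynomial of `M`. -/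
def tutte (M : FinMatroid α) {R : Type} [CommRing R] (x y : R) : R :=
  ∑ S ∈ M.E.powerset,
    (x - 1) ^ (M.rk M.E - M.rk S) * (y - 1) ^ (S.card - M.rk S)

/-- `e` is a loop of `M`. -/
def IsLoop (M : FinMatroid α) (e : α) : Prop := M.rk {e} = 0

/-- `e` is a coloop of `M` : it belongs to every basis of `M`. -/
def IsColoop (M : FinMatroid α) (e : α) : Prop :=
  ∀ B ⊆ M.E, M.rk B = B.card → M.rk B = M.rk M.E → e ∈ B

end FinMatroid

/-- Deletion–contraction for a general element ê (neither loop nor coloop):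
T̂_M = (1 + s·t_ê)·T̂_{M∖ê} + (1 + r·t_ê)·T̂_{M/ê}. -/
theorem eqTutte_deletionContraction_general {α : Type} [DecidableEq α]
    (M Mdel Mcon : FinMatroid α) (e : α) (he : e ∈ M.E)
    (hloop : ¬ M.IsLoop e) (hcoloop : ¬ M.IsColoop e)
    (hdE : Mdel.E = M.E.erase e)
    (hdrk : ∀ S ⊆ M.E.erase e, Mdel.rk S = M.rk S)
    (hcE : Mcon.E = M.E.erase e)
    (hcrk : ∀ S ⊆ M.E.erase e, Mcon.rk S = M.rk (insert e S) - M.rk {e})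
    {R : Type} [CommRing R] (x y r s : R) (t : α → R) :
    M.eqTutte x y r s t =
      (1 + s * t e) * Mdel.eqTutte x y r s t + (1 + r * t e) * Mcon.eqTutte x y r s t := by

  classical
  set E' := M.E.erase e with hE'
  have heE' : e ∉ E' := Finset.notMem_erase e M.E
  have hE : M.E = insert e E' := (Finset.insert_erase he).symm
  have he1 : M.rk {e} = 1 := by
    have h1 := M.rk_le_card {e}
    simp only [Finset.card_singleton] at h1
    have h0 : M.rk {e} ≠ 0 := hloop
    omega
  rw [FinMatroid.IsColoop] at hcoloop
  push_neg at hcoloop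
  obtain ⟨B, hBE, hBcard, hBrk, heB⟩ := hcoloop
  have hErk : M.rk E' = M.rk M.E := by
    refine le_antisymm (M.rk_mono (Finset.erase_subset e M.E)) ?_
    calc M.rk M.E = M.rk B := hBrk.symm
    _ ≤ M.rk E' := M.rk_mono (Finset.subset_erase.mpr ⟨hBE, heB⟩)
  unfold FinMatroid.eqTutte
  rw [hdE, hcE]
  have hsplit : M.E.powerset = (insert e E').powerset := by rw [← hE]
  rw [hsplit, Finset.sum_powerset_insert heE', Finset.mul_sum, Finset.mul_sum]
  congr 1
  · apply Finset.sum_congr rfl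
    intro S hS
    rw [Finset.mem_powerset] at hS
    have heS : e ∉ S := fun h => heE' (hS h)
    have hrkS : Mdel.rk S = M.rk S := hdrk S hS
    have hrkE : Mdel.rk E' = M.rk M.E := by rw [hdrk E' (le_refl _), hErk]
    have hsd : M.E \ S = insert e (E' \ S) := by
      rw [hE, Finset.insert_sdiff_of_notMem _ heS]
    rw [hsd, Finset.prod_insert (by simp [heE']), hrkS, hrkE]
    ring
  · apply Finset.sum_congr rfl
    intro S hS
    rw [Finset.mem_powerset] at hS
    have heS : e ∉ S := fun h => heE' (hS h)
    have hconS : Mcon.rk S = M.rk (insert e S) - M.rk {e} := hcrk S hS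
    have hconE : Mcon.rk E' = M.rk M.E - M.rk {e} := by
      rw [hcrk E' (le_refl _), ← hE]
    have h1le : 1 ≤ M.rk (insert e S) := by
      have := M.rk_mono (show ({e} : Finset α) ⊆ insert e S by simp)
      omega
    have hle : M.rk (insert e S) ≤ M.rk M.E := by
      apply M.rk_mono
      rw [hE]
      exact Finset.insert_subset_insert e hS
    have hcard : (insert e S).card = S.card + 1 := Finset.card_insert_of_notMem heS
    have hsd : M.E \ insert e S = E' \ S := by
      rw [hE]
      ext a
      simp only [Finset.mem_sdiff, Finset.mem_insert, not_or]
      constructor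
      · rintro ⟨ha, hne, hnS⟩
        exact ⟨ha.resolve_left hne, hnS⟩
      · rintro ⟨ha, hnS⟩
        exact ⟨Or.inr ha, fun h => heE' (h ▸ ha), hnS⟩
    have e1 : M.rk M.E - M.rk (insert e S) =
        (M.rk M.E - M.rk {e}) - (M.rk (insert e S) - M.rk {e}) := by omega
    have e2 : (insert e S).card - M.rk (insert e S) =
        S.card - (M.rk (insert e S) - M.rk {e}) := by omega
    rw [hsd, hconS, hconE, Finset.prod_insert heS, e1, e2]
    ring
end

section
/- Let M be a matroid on ground set E and ê ∈ E a loop. Then T̂_M = ((y-1)(1 + r·t_ê) + (1 + s·t_ê)) · T̂_{M∖ê}. -/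
open Finset MvPolynomial

/-- For a loop ê:
T̂_M = ((y−1)(1 + r·t_ê) + (1 + s·t_ê))·T̂_{M∖ê}. -/
theorem eqTutte_loop {α : Type} [DecidableEq α]
    (M Mdel : FinMatroid α) (e : α) (he : e ∈ M.E) (hloop : M.IsLoop e)
    (hdE : Mdel.E = M.E.erase e)
    (hdrk : ∀ S ⊆ M.E.erase e, Mdel.rk S = M.rk S)
    {R : Type} [CommRing R] (x y r s : R) (t : α → R) :
    M.eqTutte x y r s t =
      ((y - 1) * (1 + r * t e) + (1 + s * t e)) * Mdel.eqTutte x y r s t := by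
  have heE : e ∉ M.E.erase e := Finset.notMem_erase e M.E
  have hrkins : ∀ S : Finset α, e ∉ S → M.rk (insert e S) = M.rk S := by
    intro S heS
    refine le_antisymm ?_ (M.rk_mono (Finset.subset_insert e S))
    have h := M.rk_submodular S {e}
    have h1 : S ∪ {e} = insert e S := by
      ext x; simp [Finset.mem_insert, or_comm]
    rw [h1, hloop] at h
    omega
  have hrkE : M.rk (M.E.erase e) = M.rk M.E := by
    conv_rhs => rw [← Finset.insert_erase he]
    exact (hrkins _ heE).symm
  rw [FinMatroid.eqTutte, FinMatroid.eqTutte, hdE]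
  conv_lhs => rw [← Finset.insert_erase he]
  rw [Finset.sum_powerset_insert heE]
  conv_rhs => rw [add_mul, add_comm, Finset.mul_sum, Finset.mul_sum]
  congr 1
  · refine Finset.sum_congr rfl fun S hS => ?_
    rw [Finset.mem_powerset] at hS
    have heS : e ∉ S := fun h => heE (hS h)
    have h1 : insert e (M.E.erase e) \ S = insert e (M.E.erase e \ S) := by
      ext x
      simp only [Finset.mem_sdiff, Finset.mem_insert]
      constructor
      · rintro ⟨h | h, h2⟩
        · exact Or.inl h
        · exact Or.inr ⟨h, h2⟩
      · rintro (rfl | ⟨h, h2⟩)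
        · exact ⟨Or.inl rfl, heS⟩
        · exact ⟨Or.inr h, h2⟩
    have h2 : e ∉ M.E.erase e \ S := fun h => heE (Finset.mem_sdiff.mp h).1
    rw [h1, Finset.prod_insert h2, hrkins _ heE, hdrk S hS, hdrk _ (subset_refl _), hrkE]
    ring
  · refine Finset.sum_congr rfl fun S hS => ?_
    rw [Finset.mem_powerset] at hS
    have heS : e ∉ S := fun h => heE (hS h)
    have h1 : insert e (M.E.erase e) \ insert e S = M.E.erase e \ S := by
      ext x
      simp only [Finset.mem_sdiff, Finset.mem_insert, not_or]
      constructor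
      · rintro ⟨h | h, hne, hxS⟩
        · exact absurd h hne
        · exact ⟨h, hxS⟩
      · rintro ⟨hx, hxS⟩
        exact ⟨Or.inr hx, fun hh => heE (hh ▸ hx), hxS⟩
    have hc : (insert e S).card = S.card + 1 := Finset.card_insert_of_notMem heS
    have hr : M.rk (insert e S) = M.rk S := hrkins S heS
    have hle := M.rk_le_card S
    have hex : (insert e S).card - M.rk (insert e S) = (S.card - M.rk S) + 1 := by
      rw [hc, hr]; omega
    rw [h1, Finset.prod_insert heS, hex, hr, pow_succ, hrkins _ heE, hdrk S hS,
      hdrk _ (subset_refl _), hrkE]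
    ring
end

section
/- Let M be a matroid on ground set E and ê ∈ E a coloop. Then T̂_M = ((x-1)(1 + s·t_ê) + (1 + r·t_ê)) · T̂_{M/ê}. -/
open Finset MvPolynomial

namespace FinMatroid

variable {α : Type} [DecidableEq α]

lemma rk_insert_le (M : FinMatroid α) (S : Finset α) (a : α) :
    M.rk (insert a S) ≤ M.rk S + 1 := by
  have h := M.rk_submodular S {a}
  have h1 : M.rk {a} ≤ 1 := by simpa using M.rk_le_card {a}
  have h2 : S ∪ {a} = insert a S := by rw [Finset.union_comm, ← Finset.insert_eq]
  rw [h2] at h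
  omega

lemma exists_basis (M : FinMatroid α) (X : Finset α) :
    ∃ B, B ⊆ X ∧ M.rk B = B.card ∧ M.rk B = M.rk X := by
  induction X using Finset.strongInduction with
  | _ X ih =>
    by_cases h : M.rk X = X.card
    · exact ⟨X, Finset.Subset.refl X, h, rfl⟩
    · have hX : X.Nonempty := by
        rcases Finset.eq_empty_or_nonempty X with rfl | hne
        · exact absurd (by simp [M.rk_empty]) h
        · exact hne
      obtain ⟨a, ha⟩ := hX
      obtain ⟨B, hBX, hB1, hB2⟩ := ih (X.erase a) (Finset.erase_ssubset ha)
      have haX : insert a (X.erase a) = X := Finset.insert_erase ha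
      by_cases hr : M.rk (X.erase a) = M.rk X
      · exact ⟨B, hBX.trans (Finset.erase_subset a X), hB1, hB2.trans hr⟩
      · have hle : M.rk (X.erase a) ≤ M.rk X := M.rk_mono (Finset.erase_subset a X)
        have hup : M.rk X ≤ M.rk (X.erase a) + 1 := by
          have := M.rk_insert_le (X.erase a) a; rwa [haX] at this
        have haB : a ∉ B := fun hin => (Finset.notMem_erase a X) (hBX hin)
        refine ⟨insert a B, ?_, ?_, ?_⟩
        · intro z hz
          rcases Finset.mem_insert.1 hz with rfl | hz
          · exact ha
          · exact (Finset.erase_subset a X) (hBX hz)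
        all_goals {
          have hsub := M.rk_submodular (insert a B) (X.erase a)
          have hu : insert a B ∪ X.erase a = X := by
            rw [Finset.insert_union, Finset.union_eq_right.mpr hBX, haX]
          have hi : insert a B ∩ X.erase a = B := by
            rw [Finset.insert_inter_of_notMem (Finset.notMem_erase a X),
              Finset.inter_eq_left.mpr hBX]
          rw [hu, hi] at hsub
          have hcard : (insert a B).card = B.card + 1 := Finset.card_insert_of_notMem haB
          have h1 := M.rk_le_card (insert a B)
          omega }

end FinMatroid


/-- For a coloop ê:
T̂_M = ((x−1)(1 + s·t_ê) + (1 + r·t_ê))·T̂_{M/ê}. -/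
theorem eqTutte_coloop {α : Type} [DecidableEq α]
    (M Mcon : FinMatroid α) (e : α) (he : e ∈ M.E) (hcoloop : M.IsColoop e)
    (hcE : Mcon.E = M.E.erase e)
    (hcrk : ∀ S ⊆ M.E.erase e, Mcon.rk S = M.rk (insert e S) - M.rk {e})
    {R : Type} [CommRing R] (x y r s : R) (t : α → R) :
    M.eqTutte x y r s t =
      ((x - 1) * (1 + s * t e) + (1 + r * t e)) * Mcon.eqTutte x y r s t := by
  classical
  have heE' : e ∉ M.E.erase e := Finset.notMem_erase e M.E
  set E' := M.E.erase e with hE'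
  have hins : insert e E' = M.E := Finset.insert_erase he
  have hlt : M.rk E' + 1 = M.rk M.E := by
    obtain ⟨B, hB1, hB2, hB3⟩ := M.exists_basis E'
    have hne : M.rk E' ≠ M.rk M.E := by
      intro h
      have heB : e ∈ B :=
        hcoloop B (hB1.trans (Finset.erase_subset e M.E)) hB2 (hB3.trans h)
      exact heE' (hB1 heB)
    have h1 : M.rk E' ≤ M.rk M.E := M.rk_mono (Finset.erase_subset e M.E)
    have h2 : M.rk M.E ≤ M.rk E' + 1 := by
      have := M.rk_insert_le E' e; rwa [hins] at this
    omega
  have hrke : M.rk {e} = 1 := by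
    have hsub := M.rk_submodular E' {e}
    have hu : E' ∪ {e} = M.E := by
      rw [show E' ∪ {e} = insert e E' by rw [Finset.union_comm, ← Finset.insert_eq], hins]
    have hi : E' ∩ {e} = ∅ := by
      simp [Finset.inter_singleton_of_notMem heE']
    have h1 : M.rk {e} ≤ 1 := by simpa using M.rk_le_card {e}
    rw [hu, hi, M.rk_empty] at hsub
    omega
  have hrkins : ∀ S ⊆ E', M.rk (insert e S) = M.rk S + 1 := by
    intro S hS
    have h1 := M.rk_insert_le S e
    have hsub := M.rk_submodular (insert e S) E'
    have hu : insert e S ∪ E' = M.E := by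
      rw [Finset.insert_union, Finset.union_eq_right.mpr hS, hins]
    have hi : insert e S ∩ E' = S := by
      rw [Finset.insert_inter_of_notMem heE', Finset.inter_eq_left.mpr hS]
    rw [hu, hi] at hsub
    omega
  have hcrk' : ∀ S ⊆ E', Mcon.rk S = M.rk S := by
    intro S hS
    rw [hcrk S hS, hrkins S hS, hrke]
    omega
  set c1 : R := (x - 1) * (1 + s * t e) with hc1
  set c2 : R := (1 + r * t e) with hc2
  have hg : Mcon.eqTutte x y r s t
      = ∑ S ∈ E'.powerset, (x - 1) ^ (M.rk E' - M.rk S) * (y - 1) ^ (S.card - M.rk S) *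
          (∏ a ∈ S, (1 + r * t a)) * (∏ a ∈ E' \ S, (1 + s * t a)) := by
    unfold FinMatroid.eqTutte
    rw [hcE]
    refine Finset.sum_congr rfl fun S hS => ?_
    rw [hcrk' S (Finset.mem_powerset.mp hS), hcrk' E' (Finset.Subset.refl E')]
  have hMsum : M.eqTutte x y r s t
      = ∑ S ∈ E'.powerset, c1 * ((x - 1) ^ (M.rk E' - M.rk S) * (y - 1) ^ (S.card - M.rk S) *
          (∏ a ∈ S, (1 + r * t a)) * (∏ a ∈ E' \ S, (1 + s * t a)))
        + ∑ S ∈ E'.powerset, c2 * ((x - 1) ^ (M.rk E' - M.rk S) * (y - 1) ^ (S.card - M.rk S) *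
          (∏ a ∈ S, (1 + r * t a)) * (∏ a ∈ E' \ S, (1 + s * t a))) := by
    unfold FinMatroid.eqTutte
    rw [← hins, Finset.sum_powerset_insert heE']
    congr 1
    · refine Finset.sum_congr rfl fun S hS => ?_
      have hS' : S ⊆ E' := Finset.mem_powerset.mp hS
      have he2 : M.rk (insert e E') - M.rk S = (M.rk E' - M.rk S) + 1 := by
        have h1 : M.rk (insert e E') = M.rk E' + 1 := hrkins E' (Finset.Subset.refl E')
        have h2 := M.rk_mono hS'
        omega
      rw [he2, pow_succ]
      have heS : e ∉ S := fun h => heE' (hS' h)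
      have hsd : insert e E' \ S = insert e (E' \ S) := by
        ext a
        simp only [Finset.mem_sdiff, Finset.mem_insert]
        constructor
        · rintro ⟨(rfl | h), h2⟩
          · exact Or.inl rfl
          · exact Or.inr ⟨h, h2⟩
        · rintro (rfl | ⟨h, h2⟩)
          · exact ⟨Or.inl rfl, heS⟩
          · exact ⟨Or.inr h, h2⟩
      rw [hsd, Finset.prod_insert (fun h => heE' (Finset.mem_sdiff.mp h).1)]
      ring
    · refine Finset.sum_congr rfl fun S hS => ?_
      have hS' : S ⊆ E' := Finset.mem_powerset.mp hS
      have heS : e ∉ S := fun h => heE' (hS' h)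
      have he1 := hrkins S hS'
      have he2 : M.rk (insert e E') - M.rk (insert e S) = M.rk E' - M.rk S := by
        have h1 : M.rk (insert e E') = M.rk E' + 1 := hrkins E' (Finset.Subset.refl E')
        omega
      have he3 : (insert e S).card - M.rk (insert e S) = S.card - M.rk S := by
        rw [Finset.card_insert_of_notMem heS, he1]
        omega
      have hsd : insert e E' \ insert e S = E' \ S := by
        ext a
        simp only [Finset.mem_sdiff, Finset.mem_insert]
        constructor
        · rintro ⟨(rfl | h), h2⟩
          · exact absurd (Or.inl rfl) h2
          · exact ⟨h, fun hh => h2 (Or.inr hh)⟩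
        · rintro ⟨h, h2⟩
          refine ⟨Or.inr h, ?_⟩
          rintro (rfl | hh)
          · exact heE' h
          · exact h2 hh
      rw [he2, he3, hsd, Finset.prod_insert heS]
      ring
  rw [hMsum, hg, ← Finset.mul_sum, ← Finset.mul_sum, ← add_mul]
end

section
/- Let M be a matroid on ground set E consisting only of loops and coloops, with L ⊆ E its set of loops. Then T̂_M(x,y,r,s) = ∏_{e∈L}(y + (yr − r + s)·t_e) · ∏_{e∉L}(x + (xs − s + r)·t_e). -/
open Finset MvPolynomial

namespace FinMatroidAux

open FinMatroid

variable {α : Type} [DecidableEq α] (M : FinMatroid α)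

lemma rk_union_le (S T : Finset α) : M.rk (S ∪ T) ≤ M.rk S + M.rk T := by
  have := M.rk_submodular S T
  omega

lemma rk_indep_subset {A B : Finset α} (hB : M.rk B = B.card) (hAB : A ⊆ B) :
    M.rk A = A.card := by
  have h1 : M.rk A ≤ A.card := M.rk_le_card A
  have hu : A ∪ (B \ A) = B := Finset.union_sdiff_of_subset hAB
  have h2 : M.rk B ≤ M.rk A + M.rk (B \ A) := by
    calc M.rk B = M.rk (A ∪ (B \ A)) := by rw [hu]
    _ ≤ _ := rk_union_le M _ _
  have h3 : M.rk (B \ A) ≤ (B \ A).card := M.rk_le_card _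
  have h4 : (B \ A).card = B.card - A.card := Finset.card_sdiff_of_subset hAB
  have h5 : A.card ≤ B.card := Finset.card_le_card hAB
  omega

lemma rk_erase_ge (T : Finset α) (e : α) (he : e ∈ T) :
    M.rk T ≤ M.rk (T.erase e) + 1 := by
  have hu : {e} ∪ T.erase e = T := by
    rw [← Finset.insert_eq, Finset.insert_erase he]
  have h1 : M.rk T ≤ M.rk {e} + M.rk (T.erase e) := by
    calc M.rk T = M.rk ({e} ∪ T.erase e) := by rw [hu]
    _ ≤ _ := rk_union_le M _ _
  have h2 : M.rk {e} ≤ 1 := by simpa using M.rk_le_card {e}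
  omega

lemma indep_of_critical : ∀ n (T : Finset α), T.card = n →
    (∀ e ∈ T, M.rk (T.erase e) < M.rk T) → M.rk T = T.card := by
  intro n
  induction n with
  | zero =>
    intro T hT _
    rw [Finset.card_eq_zero.mp hT]
    simp [M.rk_empty]
  | succ n ih =>
    intro T hT hcrit
    have hne : T.Nonempty := Finset.card_pos.mp (by omega)
    obtain ⟨e, he⟩ := hne
    have hTe : (T.erase e).card = n := by
      rw [Finset.card_erase_of_mem he]; omega
    have heq : ∀ f ∈ T, M.rk (T.erase f) + 1 = M.rk T := by
      intro f hf
      have := hcrit f hf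
      have := rk_erase_ge M T f hf
      omega
    have hcrit' : ∀ f ∈ T.erase e, M.rk ((T.erase e).erase f) < M.rk (T.erase e) := by
      intro f hf
      have hfT : f ∈ T := Finset.mem_of_mem_erase hf
      have hfe : f ≠ e := Finset.ne_of_mem_erase hf
      have hU : T.erase e ∪ T.erase f = T := by
        ext a
        simp only [Finset.mem_union, Finset.mem_erase]
        constructor
        · rintro (⟨_, h⟩ | ⟨_, h⟩) <;> exact h
        · intro ha
          by_cases h : a = e
          · exact Or.inr ⟨by rw [h]; exact fun hh => hfe hh.symm, ha⟩
          · exact Or.inl ⟨h, ha⟩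
      have hI : T.erase e ∩ T.erase f = (T.erase e).erase f := by
        ext a
        simp only [Finset.mem_inter, Finset.mem_erase]
        tauto
      have hsub := M.rk_submodular (T.erase e) (T.erase f)
      rw [hU, hI] at hsub
      have h1 := heq e he
      have h2 := heq f hfT
      omega
    have hind := ih (T.erase e) hTe hcrit'
    have := heq e he
    omega

lemma exists_basis : ∀ n (T : Finset α), T.card = n →
    ∃ B ⊆ T, M.rk B = B.card ∧ M.rk B = M.rk T := by
  intro n
  induction n with
  | zero =>
    intro T hT
    exact ⟨T, Finset.Subset.refl T, by
      rw [Finset.card_eq_zero.mp hT]; simp [M.rk_empty], rfl⟩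
  | succ n ih =>
    intro T hT
    by_cases hcrit : ∀ e ∈ T, M.rk (T.erase e) < M.rk T
    · exact ⟨T, Finset.Subset.refl T, indep_of_critical M _ T hT hcrit, rfl⟩
    · push_neg at hcrit
      obtain ⟨e, he, hge⟩ := hcrit
      have hle : M.rk (T.erase e) ≤ M.rk T := M.rk_mono (Finset.erase_subset e T)
      have heq : M.rk (T.erase e) = M.rk T := le_antisymm hle hge
      have hTe : (T.erase e).card = n := by
        rw [Finset.card_erase_of_mem he]; omega
      obtain ⟨B, hB1, hB2, hB3⟩ := ih (T.erase e) hTe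
      exact ⟨B, hB1.trans (Finset.erase_subset e T), hB2, by rw [hB3, heq]⟩

lemma rk_loops (L : Finset α) (hloops : ∀ e ∈ L, M.IsLoop e) :
    ∀ S ⊆ L, M.rk S = 0 := by
  intro S
  induction S using Finset.induction_on with
  | empty => intro _; exact M.rk_empty
  | @insert a s hnotmem ih =>
    intro hsub
    have h1 : M.rk ({a} ∪ s) ≤ M.rk {a} + M.rk s := rk_union_le M _ _
    have h2 : M.rk {a} = 0 := hloops a (hsub (Finset.mem_insert_self a s))
    have h3 : M.rk s = 0 := ih (fun x hx => hsub (Finset.mem_insert_of_mem hx))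
    rw [Finset.insert_eq]
    omega

lemma rk_eq_card_sdiff (L : Finset α) (hL : L ⊆ M.E)
    (hloops : ∀ e ∈ L, M.IsLoop e)
    (hcoloops : ∀ e ∈ M.E \ L, M.IsColoop e) :
    ∀ S ⊆ M.E, M.rk S = (S \ L).card := by
  obtain ⟨B, hBE, hBind, hBrk⟩ := exists_basis M M.E.card M.E rfl
  have hELB : M.E \ L ⊆ B := fun e he => hcoloops e he B hBE hBind hBrk
  intro S hS
  -- upper bound
  have hup : M.rk S ≤ (S \ L).card := by
    have hu : (S \ L) ∪ (S ∩ L) = S := by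
      ext a; simp only [Finset.mem_union, Finset.mem_sdiff, Finset.mem_inter]; tauto
    have h1 : M.rk S ≤ M.rk (S \ L) + M.rk (S ∩ L) := by
      calc M.rk S = M.rk ((S \ L) ∪ (S ∩ L)) := by rw [hu]
      _ ≤ _ := rk_union_le M _ _
    have h2 : M.rk (S ∩ L) = 0 := rk_loops M L hloops _ Finset.inter_subset_right
    have h3 : M.rk (S \ L) ≤ (S \ L).card := M.rk_le_card _
    omega
  -- lower bound
  have hsub : S \ L ⊆ B := by
    intro a ha
    apply hELB
    rw [Finset.mem_sdiff] at ha ⊢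
    exact ⟨hS ha.1, ha.2⟩
  have hind : M.rk (S \ L) = (S \ L).card := rk_indep_subset M hBind hsub
  have hlow : (S \ L).card ≤ M.rk S := by
    rw [← hind]; exact M.rk_mono Finset.sdiff_subset
  omega

end FinMatroidAux

/-- If every element of M is a loop or a coloop, and L is the set of loops,
then T̂_M = ∏_{e∈L}(y + (yr−r+s)t_e) · ∏_{e∉L}(x + (xs−s+r)t_e). -/
theorem eqTutte_loops_coloops {α : Type} [DecidableEq α]
    (M : FinMatroid α) (L : Finset α) (hL : L ⊆ M.E)
    (hloops : ∀ e ∈ L, M.IsLoop e)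
    (hcoloops : ∀ e ∈ M.E \ L, M.IsColoop e)
    {R : Type} [CommRing R] (x y r s : R) (t : α → R) :
    M.eqTutte x y r s t =
      (∏ e ∈ L, (y + (y * r - r + s) * t e)) *
        ∏ e ∈ M.E \ L, (x + (x * s - s + r) * t e) := by
  classical
  have hrk := FinMatroidAux.rk_eq_card_sdiff M L hL hloops hcoloops
  set F : α → R := fun e => (if e ∈ L then (y - 1) else 1) * (1 + r * t e) with hF
  set G : α → R := fun e => (if e ∈ L then 1 else (x - 1)) * (1 + s * t e) with hG
  have key : M.eqTutte x y r s t = ∑ S ∈ M.E.powerset,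
      (∏ e ∈ S, F e) * ∏ e ∈ M.E \ S, G e := by
    rw [FinMatroid.eqTutte]
    apply Finset.sum_congr rfl
    intro S hS
    rw [Finset.mem_powerset] at hS
    have hrkS : M.rk S = (S \ L).card := hrk S hS
    have hrkE : M.rk M.E = (M.E \ L).card := hrk M.E (Finset.Subset.refl _)
    -- exponent of (y-1)
    have hScard : S.card - M.rk S = (S ∩ L).card := by
      have : (S \ L).card + (S ∩ L).card = S.card := by
        rw [Finset.card_sdiff_add_card_inter]
      omega
    -- exponent of (x-1)
    have hEcard : M.rk M.E - M.rk S = ((M.E \ S) \ L).card := by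
      have hsub2 : S \ L ⊆ M.E \ L := Finset.sdiff_subset_sdiff hS (Finset.Subset.refl L)
      have hset : (M.E \ L) \ (S \ L) = (M.E \ S) \ L := by
        ext a
        simp only [Finset.mem_sdiff]
        tauto
      have : ((M.E \ L) \ (S \ L)).card = (M.E \ L).card - (S \ L).card :=
        Finset.card_sdiff_of_subset hsub2
      rw [hset] at this
      omega
    have hprodF : ∏ e ∈ S, F e = (y - 1) ^ (S ∩ L).card * ∏ e ∈ S, (1 + r * t e) := by
      rw [hF, Finset.prod_mul_distrib]
      congr 1
      rw [Finset.prod_ite, Finset.prod_const, Finset.prod_const, one_pow, mul_one,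
        Finset.filter_mem_eq_inter]
    have hprodG : ∏ e ∈ M.E \ S, G e =
        (x - 1) ^ ((M.E \ S) \ L).card * ∏ e ∈ M.E \ S, (1 + s * t e) := by
      rw [hG, Finset.prod_mul_distrib]
      congr 1
      rw [Finset.prod_ite, Finset.prod_const, Finset.prod_const, one_pow, one_mul]
      congr 2
      rw [Finset.sdiff_eq_filter (M.E \ S) L]
    rw [hprodF, hprodG, hScard, hEcard]
    ring
  rw [key, ← Finset.prod_add F G M.E]
  rw [← Finset.prod_sdiff hL, mul_comm]
  congr 1
  · apply Finset.prod_congr rfl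
    intro e he
    simp only [hF, hG, if_pos he]
    ring
  · apply Finset.prod_congr rfl
    intro e he
    rw [Finset.mem_sdiff] at he
    simp only [hF, hG, if_neg he.2]
    ring
end

section
/- Let M = U_{n,n+1} be the uniform matroid of rank n on a ground set E of size n+1. Then T̂_M(x,y,r,s) = (1/(x-1))·(∏_{e∈E}(x + (xs−s+r)·t_e) − ∏_{e∈E}(1+r·t_e)) + (y−1)·∏_{e∈E}(1+r·t_e), interpreted as the polynomial identity (x−1)·T̂_M = ∏_{e∈E}(x + (xs−s+r)·t_e) − ∏_{e∈E}(1+r·t_e) + (x−1)(y−1)·∏_{e∈E}(1+r·t_e). -/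
open Finset MvPolynomial

/-- For the uniform matroid U_{n,n+1} (ground set of size n+1, rank
function S ↦ min(|S|, n)):
(x−1)·T̂_M = ∏_{e∈E}(x + (xs−s+r)t_e) − ∏_{e∈E}(1+r·t_e) + (x−1)(y−1)·∏_{e∈E}(1+r·t_e). -/
theorem eqTutte_uniform_corank_one {α : Type} [DecidableEq α]
    (M : FinMatroid α) (n : ℕ) (hcard : M.E.card = n + 1)
    (hrk : ∀ S ⊆ M.E, M.rk S = min S.card n)
    {R : Type} [CommRing R] (x y r s : R) (t : α → R) :
    (x - 1) * M.eqTutte x y r s t =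
      (∏ e ∈ M.E, (x + (x * s - s + r) * t e)) - (∏ e ∈ M.E, (1 + r * t e))
        + (x - 1) * (y - 1) * ∏ e ∈ M.E, (1 + r * t e) := by
  classical
  have hEmem : M.E ∈ M.E.powerset := Finset.mem_powerset_self _
  have hrkE : M.rk M.E = n := by
    rw [hrk M.E (Finset.Subset.refl _), hcard]
    exact min_eq_right (Nat.le_succ n)
  have hprod : (∏ e ∈ M.E, (x + (x * s - s + r) * t e))
      = ∑ S ∈ M.E.powerset,
          (x - 1) ^ (n + 1 - S.card) * (∏ e ∈ S, (1 + r * t e)) *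
            ∏ e ∈ M.E \ S, (1 + s * t e) := by
    have h1 : ∀ e ∈ M.E, x + (x * s - s + r) * t e
        = (1 + r * t e) + (x - 1) * (1 + s * t e) := fun e _ => by ring
    rw [Finset.prod_congr rfl h1, Finset.prod_add]
    refine Finset.sum_congr rfl fun S hS => ?_
    rw [Finset.prod_mul_distrib, Finset.prod_const,
        Finset.card_sdiff_of_subset (Finset.mem_powerset.mp hS), hcard]
    ring
  rw [FinMatroid.eqTutte, Finset.mul_sum, hprod,
      Finset.sum_eq_sum_sdiff_singleton_add hEmem,
      Finset.sum_eq_sum_sdiff_singleton_add hEmem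
        (fun S => (x - 1) ^ (n + 1 - S.card) * (∏ e ∈ S, (1 + r * t e)) *
          ∏ e ∈ M.E \ S, (1 + s * t e))]
  have hterm : ∀ S ∈ M.E.powerset \ {M.E},
      (x - 1) * ((x - 1) ^ (M.rk M.E - M.rk S) * (y - 1) ^ (S.card - M.rk S) *
        (∏ e ∈ S, (1 + r * t e)) * ∏ e ∈ M.E \ S, (1 + s * t e))
      = (x - 1) ^ (n + 1 - S.card) * (∏ e ∈ S, (1 + r * t e)) *
          ∏ e ∈ M.E \ S, (1 + s * t e) := by
    intro S hS
    obtain ⟨hS1, hS2⟩ := Finset.mem_sdiff.mp hS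
    have hsub := Finset.mem_powerset.mp hS1
    have hne : S ≠ M.E := by simpa using hS2
    have hcardS : S.card ≤ n := by
      have : S.card < M.E.card :=
        Finset.card_lt_card (Finset.ssubset_iff_subset_ne.mpr ⟨hsub, hne⟩)
      omega
    have hrkS : M.rk S = S.card := by rw [hrk S hsub]; exact min_eq_left hcardS
    rw [hrkS, hrkE, Nat.sub_self, pow_zero]
    have h2 : n + 1 - S.card = (n - S.card) + 1 := by omega
    rw [h2, pow_succ]
    ring
  rw [Finset.sum_congr rfl hterm]
  have hE1 : (x - 1) * ((x - 1) ^ (M.rk M.E - M.rk M.E) *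
      (y - 1) ^ (M.E.card - M.rk M.E) * (∏ e ∈ M.E, (1 + r * t e)) *
      ∏ e ∈ M.E \ M.E, (1 + s * t e))
      = (x - 1) * (y - 1) * ∏ e ∈ M.E, (1 + r * t e) := by
    rw [hrkE, hcard, Nat.sub_self, pow_zero, Finset.sdiff_self, Finset.prod_empty]
    have : n + 1 - n = 1 := by omega
    rw [this, pow_one]; ring
  have hE2 : (x - 1) ^ (n + 1 - M.E.card) * (∏ e ∈ M.E, (1 + r * t e)) *
      ∏ e ∈ M.E \ M.E, (1 + s * t e) = ∏ e ∈ M.E, (1 + r * t e) := by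
    rw [hcard, Nat.sub_self, pow_zero, Finset.sdiff_self, Finset.prod_empty]; ring
  rw [hE1, hE2]; ring
end

section
/- Let M be a matroid on ground set E and A ⊆ E. The coefficient of the monomial t_A = ∏_{e∈A} t_e in T̂_M(x,y,1,0) equals (y−1)^{nl_M(A)} · T_{M/A}(x,y), where nl_M(A) = |A| − rk_M(A) and T_{M/A} is the classical Tutte polynomial of the contraction M/A. -/
open Finset MvPolynomial

section Helpers
variable {α : Type} [DecidableEq α]

lemma sum_single_apply (T : Finset α) (a : α) :
    (∑ e ∈ T, Finsupp.single e (1 : ℕ)) a = if a ∈ T then 1 else 0 := by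
  rw [Finset.sum_apply']
  simp [Finsupp.single_apply, Finset.sum_ite_eq' T a]

lemma sum_single_inj {T U : Finset α}
    (h : (∑ e ∈ T, Finsupp.single e (1 : ℕ)) = ∑ e ∈ U, Finsupp.single e 1) : T = U := by
  ext a
  have := congrArg (fun f => f a) h
  simp only [sum_single_apply] at this
  by_cases hT : a ∈ T <;> by_cases hU : a ∈ U <;> simp_all

lemma prod_X_eq_monomial {R : Type} [CommSemiring R] (T : Finset α) :
    (∏ e ∈ T, (X e : MvPolynomial α R)) = monomial (∑ e ∈ T, Finsupp.single e 1) 1 := by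
  induction T using Finset.induction_on with
  | empty => simp [monomial_zero']
  | insert _ _ h ih =>
      rw [Finset.prod_insert h, ih, Finset.sum_insert h, X, monomial_mul, one_mul]

lemma coeff_prod_one_add {R : Type} [CommRing R] [Nontrivial R] (A S : Finset α) :
    MvPolynomial.coeff (R := R) (∑ e ∈ A, Finsupp.single e 1)
      (∏ e ∈ S, (1 + X e)) = if A ⊆ S then 1 else 0 := by
  have hexp : (∏ e ∈ S, ((1 : MvPolynomial α R) + X e))
      = ∑ T ∈ S.powerset, ∏ e ∈ T, X e := by
    simp_rw [add_comm (1 : MvPolynomial α R)]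
    rw [Finset.prod_add]
    refine Finset.sum_congr rfl fun T hT => ?_
    simp
  rw [hexp, coeff_sum]
  have : ∀ T ∈ S.powerset, MvPolynomial.coeff (R := R) (∑ e ∈ A, Finsupp.single e 1)
      (∏ e ∈ T, X e) = if T = A then 1 else 0 := by
    intro T _
    rw [prod_X_eq_monomial, coeff_monomial]
    rcases eq_or_ne T A with rfl | h
    · simp
    · rw [if_neg (fun hh => h (sum_single_inj hh)), if_neg h]
  rw [Finset.sum_congr rfl this, Finset.sum_ite_eq' S.powerset A (fun _ => (1:R))]
  simp [Finset.mem_powerset]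

end Helpers

/-- The coefficient of t_A in T̂_M(x,y,1,0) is
(y−1)^{nl_M(A)}·T_{M/A}(x,y). -/
theorem coeff_eqTutte_r_one_s_zero {α : Type} [DecidableEq α]
    (M Mcon : FinMatroid α) (A : Finset α) (hA : A ⊆ M.E)
    (hcE : Mcon.E = M.E \ A)
    (hcrk : ∀ S ⊆ M.E \ A, Mcon.rk S = M.rk (S ∪ A) - M.rk A) :
    MvPolynomial.coeff (∑ e ∈ A, Finsupp.single e 1)
        (M.eqTutte (R := MvPolynomial α (MvPolynomial (Fin 2) ℤ))
          (MvPolynomial.C (MvPolynomial.X 0)) (MvPolynomial.C (MvPolynomial.X 1))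
          1 0 MvPolynomial.X)
      = (MvPolynomial.X 1 - 1) ^ (A.card - M.rk A) *
          Mcon.tutte (MvPolynomial.X 0) (MvPolynomial.X 1) := by
  classical
  rw [FinMatroid.eqTutte]
  simp only [zero_mul, add_zero, Finset.prod_const_one, mul_one, one_mul]
  rw [coeff_sum]
  have hterm : ∀ S ∈ M.E.powerset,
      MvPolynomial.coeff (∑ e ∈ A, Finsupp.single e 1)
        ((C (X 0) - 1) ^ (M.rk M.E - M.rk S) * (C (X 1) - 1) ^ (S.card - M.rk S) *
          ∏ e ∈ S, (1 + X e))
      = if A ⊆ S then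
          ((X 0 - 1 : MvPolynomial (Fin 2) ℤ) ^ (M.rk M.E - M.rk S) *
            (X 1 - 1) ^ (S.card - M.rk S)) else 0 := by
    intro S _
    have h0 : (C (X 0) - 1 : MvPolynomial α (MvPolynomial (Fin 2) ℤ)) = C (X 0 - 1) := by
      rw [map_sub, C_1]
    have h1 : (C (X 1) - 1 : MvPolynomial α (MvPolynomial (Fin 2) ℤ)) = C (X 1 - 1) := by
      rw [map_sub, C_1]
    rw [h0, h1, ← C_pow, ← C_pow, ← C_mul, coeff_C_mul, coeff_prod_one_add]
    split <;> simp
  rw [Finset.sum_congr rfl hterm, ← Finset.sum_filter]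
  rw [FinMatroid.tutte, Finset.mul_sum, hcE]
  have hrkE : Mcon.rk (M.E \ A) = M.rk M.E - M.rk A := by
    rw [hcrk (M.E \ A) (Finset.Subset.refl _), Finset.sdiff_union_of_subset hA]
  refine Finset.sum_bij' (fun S _ => S \ A) (fun U _ => U ∪ A) ?_ ?_ ?_ ?_ ?_
  · intro S hS
    simp only [Finset.mem_filter, Finset.mem_powerset] at hS
    simp [Finset.mem_powerset, Finset.sdiff_subset_sdiff hS.1 (Finset.Subset.refl A)]
  · intro U hU
    simp only [Finset.mem_powerset] at hU ⊢
    simp only [Finset.mem_filter, Finset.mem_powerset]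
    constructor
    · exact Finset.union_subset (hU.trans (Finset.sdiff_subset)) hA
    · exact Finset.subset_union_right
  · intro S hS
    simp only [Finset.mem_filter, Finset.mem_powerset] at hS
    exact Finset.sdiff_union_of_subset hS.2
  · intro U hU
    simp only [Finset.mem_powerset] at hU
    rw [Finset.union_sdiff_right]
    exact Finset.sdiff_eq_self_of_disjoint (Finset.disjoint_left.mpr
      fun a haU haA => (Finset.mem_sdiff.mp (hU haU)).2 haA)
  · intro S hS
    simp only [Finset.mem_filter, Finset.mem_powerset] at hS
    obtain ⟨hSE, hAS⟩ := hS
    have hUA : S \ A ⊆ M.E \ A := Finset.sdiff_subset_sdiff hSE (Finset.Subset.refl A)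
    have hrkU : Mcon.rk (S \ A) = M.rk S - M.rk A := by
      rw [hcrk _ hUA, Finset.sdiff_union_of_subset hAS]
    have hcard : (S \ A).card = S.card - A.card := Finset.card_sdiff_of_subset hAS
    have h1 : M.rk A ≤ M.rk S := M.rk_mono hAS
    have h2 : M.rk S ≤ M.rk M.E := M.rk_mono hSE
    have h3 : M.rk A ≤ A.card := M.rk_le_card A
    have h4 : A.card ≤ S.card := Finset.card_le_card hAS
    have h5 : M.rk S ≤ (S \ A).card + M.rk A := by
      have := M.rk_submodular (S \ A) A
      rw [Finset.sdiff_union_of_subset hAS, Finset.sdiff_inter_self, M.rk_empty] at this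
      have h6 := M.rk_le_card (S \ A)
      omega
    rw [hrkE, hrkU, hcard]
    have e1 : M.rk M.E - M.rk A - (M.rk S - M.rk A) = M.rk M.E - M.rk S := by omega
    have e2 : S.card - M.rk S =
        (A.card - M.rk A) + ((S.card - A.card) - (M.rk S - M.rk A)) := by omega
    rw [e1, e2, pow_add]
    ring
end

section
/- Let M be a matroid on ground set E, A ⊆ E, and view T̂_M(x,y,r,s) over the field ℚ(x,y,r,s) with s ≠ 0 (i.e., as an identity in ℚ(x,y,r,s)[t_e : e∈E]). Substituting t_e = −1/s for all e ∈ A yields T̂_M(x,y,r,s)|_{t_e=−1/s, e∈A} = (1 − r/s)^{|A|} (y−1)^{nl_M(A)} T̂_{M/A}(x,y,r,s), where nl_M(A) = |A| − rk_M(A). -/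
open Finset MvPolynomial

/-- Over a field with s ≠ 0, substituting t_e = −1/s for e ∈ A in
T̂_M(x,y,r,s) (as an identity in K[t_e : e ∈ E]) yields
(1 − r/s)^{|A|}·(y−1)^{nl_M(A)}·T̂_{M/A}(x,y,r,s). -/
theorem eqTutte_substitute_neg_inv_s {α : Type} [DecidableEq α]
    (M Mcon : FinMatroid α) (A : Finset α) (hA : A ⊆ M.E)
    (hcE : Mcon.E = M.E \ A)
    (hcrk : ∀ S ⊆ M.E \ A, Mcon.rk S = M.rk (S ∪ A) - M.rk A)
    {K : Type} [Field K] (x y r s : K) (hs : s ≠ 0) :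
    M.eqTutte (R := MvPolynomial α K) (MvPolynomial.C x) (MvPolynomial.C y)
        (MvPolynomial.C r) (MvPolynomial.C s)
        (fun e => if e ∈ A then MvPolynomial.C (-s⁻¹) else MvPolynomial.X e)
      = (1 - MvPolynomial.C (r / s)) ^ A.card *
          (MvPolynomial.C y - 1) ^ (A.card - M.rk A) *
          Mcon.eqTutte (MvPolynomial.C x) (MvPolynomial.C y)
            (MvPolynomial.C r) (MvPolynomial.C s) MvPolynomial.X := by
  classical
  have hsinv : (1 : MvPolynomial α K) + C s * C (-s⁻¹) = 0 := by
    rw [← C_mul, ← C_1 (σ := α), ← C_add]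
    have : (1 : K) + s * -s⁻¹ = 0 := by field_simp; ring
    rw [this, C_0]
  have hfac : (1 : MvPolynomial α K) + C r * C (-s⁻¹) = 1 - C (r / s) := by
    rw [← C_mul]
    have : r * -s⁻¹ = -(r / s) := by field_simp
    rw [this, map_neg]; ring
  unfold FinMatroid.eqTutte
  rw [hcE]
  rw [← Finset.sum_filter_of_ne (p := fun S => A ⊆ S) (by
    intro S hS hne
    by_contra hAS
    apply hne
    obtain ⟨e, heA, heS⟩ := Finset.not_subset.mp hAS
    have heES : e ∈ M.E \ S := Finset.mem_sdiff.mpr ⟨hA heA, heS⟩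
    rw [Finset.prod_eq_zero heES (by simp only [heA, if_pos]; exact hsinv), mul_zero])]
  rw [mul_assoc, Finset.mul_sum, Finset.mul_sum]
  refine Finset.sum_nbij' (i := fun S => S \ A) (j := fun S' => S' ∪ A) ?_ ?_ ?_ ?_ ?_
  · intro S hS
    rw [Finset.mem_filter, Finset.mem_powerset] at hS
    exact Finset.mem_powerset.mpr (Finset.sdiff_subset_sdiff hS.1 le_rfl)
  · intro S' hS'
    rw [Finset.mem_powerset] at hS'
    rw [Finset.mem_filter, Finset.mem_powerset]
    refine ⟨Finset.union_subset (hS'.trans Finset.sdiff_subset) hA, Finset.subset_union_right⟩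
  · intro S hS
    rw [Finset.mem_filter] at hS
    exact Finset.sdiff_union_of_subset hS.2
  · intro S' hS'
    rw [Finset.mem_powerset] at hS'
    exact Finset.union_sdiff_cancel_right (Finset.disjoint_sdiff.symm.mono_left hS')
  · intro S hS
    rw [Finset.mem_filter, Finset.mem_powerset] at hS
    obtain ⟨hSE, hAS⟩ := hS
    set S' := S \ A with hS'def
    have hSU : S' ∪ A = S := Finset.sdiff_union_of_subset hAS
    have hdis : Disjoint S' A := Finset.sdiff_disjoint
    have hS'sub : S' ⊆ M.E \ A := Finset.sdiff_subset_sdiff hSE le_rfl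
    clear_value S'
    have hrkS' : Mcon.rk S' = M.rk S - M.rk A := by rw [hcrk S' hS'sub, hSU]
    have hrkE' : Mcon.rk (M.E \ A) = M.rk M.E - M.rk A := by
      rw [hcrk (M.E \ A) le_rfl, Finset.sdiff_union_of_subset hA]
    have h1 : M.rk A ≤ M.rk S := M.rk_mono hAS
    have h2 : M.rk S ≤ M.rk M.E := M.rk_mono hSE
    have h3 : M.rk S ≤ S'.card + M.rk A := by
      have := M.rk_submodular S' A
      rw [hSU, Finset.disjoint_iff_inter_eq_empty.mp hdis, M.rk_empty] at this
      have := M.rk_le_card S'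
      omega
    have hcard : S.card = S'.card + A.card := by
      rw [← hSU, Finset.card_union_of_disjoint hdis]
    have hexp1 : M.rk M.E - M.rk S = Mcon.rk (M.E \ A) - Mcon.rk S' := by
      rw [hrkS', hrkE']; omega
    have hexp2 : S.card - M.rk S = (S'.card - Mcon.rk S') + (A.card - M.rk A) := by
      have h4 := M.rk_le_card A
      rw [hrkS', hcard]; omega
    have hprod1 : (∏ e ∈ S, ((1 : MvPolynomial α K) + C r * (if e ∈ A then C (-s⁻¹) else X e)))
        = (∏ e ∈ S', (1 + C r * X e)) * (1 - C (r / s)) ^ A.card := by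
      rw [← hSU, Finset.prod_union hdis]
      congr 1
      · refine Finset.prod_congr rfl fun e he => ?_
        rw [if_neg (Finset.disjoint_left.mp hdis he)]
      · rw [Finset.prod_congr rfl (fun e he => by rw [if_pos he]), Finset.prod_const, hfac]
    have hset : M.E \ S = (M.E \ A) \ S' := by
      rw [← hSU]; ext e; simp only [Finset.mem_sdiff, Finset.mem_union]; tauto
    have hprod2 : (∏ e ∈ M.E \ S, ((1 : MvPolynomial α K) + C s * (if e ∈ A then C (-s⁻¹) else X e)))
        = ∏ e ∈ (M.E \ A) \ S', (1 + C s * X e) := by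
      rw [hset]
      refine Finset.prod_congr rfl fun e he => ?_
      rw [if_neg (Finset.mem_sdiff.mp (Finset.mem_sdiff.mp he).1).2]
    simp only []
    rw [hexp1, hexp2, hprod1, hprod2, pow_add]
    ring
end

section
/- Define the equivariant reduced characteristic polynomial of a matroid M on ground set E as the element χ̂_M(q) of ℤ[t_e : e∈E][q] satisfying (q−1)·χ̂_M(q) = Σ_{S⊆E} q^{rk(M)−rk_M(S)} (−1)^{|S|} ∏_{e∉S}(1+t_e) ∏_{e∈S}(1+q·t_e). Then for A ⊆ E, substituting t_e = −1 for e ∈ A and t_e = 0 for e ∉ A in χ̂_M(q) gives (1−q)^{|A|}(−1)^{|A|}·χ_{M/A}(q), where χ_N(q) = (−1)^{rk(N)} T_N(1−q,0)/(q−1) is the classical reduced characteristic polynomial. -/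
open Finset MvPolynomial

private lemma neg_pow_sub_aux {a b : ℕ} (h : b ≤ a) :
    ((-1 : Polynomial ℤ)) ^ (a - b) = (-1) ^ a * (-1) ^ b := by
  conv_rhs => rw [← Nat.sub_add_cancel h]
  rw [pow_add, mul_assoc, ← mul_pow]
  norm_num

/-- Substituting t_e = −1 for e ∈ A and t_e = 0 for e ∉ A in the
equivariant reduced characteristic polynomial χ̂_M(q) gives
(1−q)^{|A|}(−1)^{|A|}·χ_{M/A}(q); stated after multiplying both sides by (q−1),
using (q−1)·χ̂_M(q) = Σ_{S⊆E} q^{rk(M)−rk_M(S)}(−1)^{|S|}∏_{e∉S}(1+t_e)∏_{e∈S}(1+q·t_e)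
and (q−1)·χ_N(q) = (−1)^{rk(N)}·T_N(1−q,0). -/
theorem eqCharPoly_substitute {α : Type} [DecidableEq α]
    (M Mcon : FinMatroid α) (A : Finset α) (hA : A ⊆ M.E)
    (hcE : Mcon.E = M.E \ A)
    (hcrk : ∀ S ⊆ M.E \ A, Mcon.rk S = M.rk (S ∪ A) - M.rk A) :
    (∑ S ∈ M.E.powerset,
        (Polynomial.X : Polynomial ℤ) ^ (M.rk M.E - M.rk S) * (-1) ^ S.card *
          (∏ e ∈ M.E \ S, (1 + (if e ∈ A then (-1 : Polynomial ℤ) else 0))) *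
          (∏ e ∈ S, (1 + Polynomial.X * (if e ∈ A then (-1 : Polynomial ℤ) else 0))))
      = (1 - Polynomial.X) ^ A.card * (-1) ^ A.card *
          ((-1) ^ (Mcon.rk Mcon.E) * Mcon.tutte (1 - Polynomial.X) 0) := by
  classical
  have hAE : (M.E \ A) ∪ A = M.E := Finset.sdiff_union_of_subset hA
  have hrkE : Mcon.rk Mcon.E = M.rk M.E - M.rk A := by
    rw [hcE, hcrk _ (Finset.Subset.refl _), hAE]
  -- kill terms with ¬ A ⊆ S
  rw [← Finset.sum_filter_add_sum_filter_not M.E.powerset (fun S => A ⊆ S)]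
  have hzero : ∑ S ∈ M.E.powerset.filter (fun S => ¬ A ⊆ S),
      (Polynomial.X : Polynomial ℤ) ^ (M.rk M.E - M.rk S) * (-1) ^ S.card *
        (∏ e ∈ M.E \ S, (1 + (if e ∈ A then (-1 : Polynomial ℤ) else 0))) *
        (∏ e ∈ S, (1 + Polynomial.X * (if e ∈ A then (-1 : Polynomial ℤ) else 0))) = 0 := by
    apply Finset.sum_eq_zero
    intro S hS
    simp only [Finset.mem_filter, Finset.mem_powerset] at hS
    obtain ⟨a, haA, haS⟩ := Finset.not_subset.1 hS.2
    have hprod : (∏ e ∈ M.E \ S, (1 + (if e ∈ A then (-1 : Polynomial ℤ) else 0))) = 0 := by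
      apply Finset.prod_eq_zero (Finset.mem_sdiff.2 ⟨hA haA, haS⟩)
      simp [haA]
    rw [hprod]
    ring
  rw [hzero, add_zero]
  -- expand the RHS
  rw [FinMatroid.tutte, hcE, Finset.mul_sum, Finset.mul_sum]
  -- reindex the LHS
  apply Finset.sum_nbij' (fun S => S \ A) (fun T => T ∪ A)
  · intro S hS
    simp only [Finset.mem_filter, Finset.mem_powerset] at hS ⊢
    exact Finset.sdiff_subset_sdiff hS.1 (Finset.Subset.refl A)
  · intro T hT
    simp only [Finset.mem_filter, Finset.mem_powerset] at hT ⊢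
    exact ⟨Finset.union_subset (hT.trans Finset.sdiff_subset) hA, Finset.subset_union_right⟩
  · intro S hS
    simp only [Finset.mem_filter, Finset.mem_powerset] at hS
    exact Finset.sdiff_union_of_subset hS.2
  · intro T hT
    simp only [Finset.mem_powerset] at hT
    have hdisj : Disjoint T A := Finset.disjoint_left.2 fun x hx =>
      (Finset.mem_sdiff.1 (hT hx)).2
    exact Finset.union_sdiff_cancel_right hdisj
  · intro S hS
    simp only [Finset.mem_filter, Finset.mem_powerset] at hS
    obtain ⟨hSE, hAS⟩ := hS
    set T := S \ A with hTdef
    have hTE : T ⊆ M.E \ A := Finset.sdiff_subset_sdiff hSE (Finset.Subset.refl A)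
    have hdisj : Disjoint T A := Finset.sdiff_disjoint
    have hUnion : T ∪ A = S := Finset.sdiff_union_of_subset hAS
    have hcard : S.card = T.card + A.card := by
      rw [← hUnion, Finset.card_union_of_disjoint hdisj]
    have hb : Mcon.rk T = M.rk S - M.rk A := by rw [hcrk T hTE, hUnion]
    have h1 : M.rk A ≤ M.rk S := M.rk_mono hAS
    have h2' : M.rk S ≤ M.rk M.E := M.rk_mono hSE
    have hbc : Mcon.rk T ≤ T.card := Mcon.rk_le_card T
    have hba : Mcon.rk T ≤ Mcon.rk Mcon.E := by rw [hb, hrkE]; omega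
    have hexp : Mcon.rk Mcon.E - Mcon.rk T = M.rk M.E - M.rk S := by
      rw [hb, hrkE]; omega
    have hP1 : (∏ e ∈ M.E \ S, (1 + (if e ∈ A then (-1 : Polynomial ℤ) else 0))) = 1 := by
      apply Finset.prod_eq_one
      intro e he
      have : e ∉ A := fun h => (Finset.mem_sdiff.1 he).2 (hAS h)
      simp [this]
    have hP2 : (∏ e ∈ S, (1 + Polynomial.X * (if e ∈ A then (-1 : Polynomial ℤ) else 0)))
        = (1 - Polynomial.X) ^ A.card := by
      rw [← hUnion, Finset.prod_union hdisj]
      have hT1 : (∏ e ∈ T, (1 + Polynomial.X * (if e ∈ A then (-1 : Polynomial ℤ) else 0))) = 1 := by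
        apply Finset.prod_eq_one
        intro e he
        have : e ∉ A := (Finset.mem_sdiff.1 (hTE he)).2
        simp [this]
      have hA1 : (∏ e ∈ A, (1 + Polynomial.X * (if e ∈ A then (-1 : Polynomial ℤ) else 0)))
          = (1 - Polynomial.X) ^ A.card := by
        calc (∏ e ∈ A, (1 + Polynomial.X * (if e ∈ A then (-1 : Polynomial ℤ) else 0)))
            = ∏ _e ∈ A, (1 - Polynomial.X) := by
              refine Finset.prod_congr rfl fun e he => ?_
              simp only [he, if_pos]
              ring
          _ = (1 - Polynomial.X) ^ A.card := Finset.prod_const _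
      rw [hT1, hA1, one_mul]
    rw [hP1, hP2, hcard, ← hexp,
      show Mcon.rk (M.E \ A) = Mcon.rk Mcon.E from by rw [hcE]]
    have hsq : ∀ n : ℕ, (-1 : Polynomial ℤ) ^ n * (-1) ^ n = 1 := by
      intro n; rw [← mul_pow]; norm_num
    rw [show ((1 : Polynomial ℤ) - Polynomial.X - 1) = -Polynomial.X by ring,
      show ((0 : Polynomial ℤ) - 1) = -1 by ring,
      neg_pow (Polynomial.X : Polynomial ℤ), pow_add, neg_pow_sub_aux hbc, neg_pow_sub_aux hba]
    linear_combination -((1 - Polynomial.X : Polynomial ℤ) ^ A.card * (-1) ^ A.card *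
        (-1) ^ T.card * Polynomial.X ^ (Mcon.rk Mcon.E - Mcon.rk T) *
        ((-1) ^ (Mcon.rk T) * (-1) ^ (Mcon.rk T))) * hsq (Mcon.rk Mcon.E) -
      ((1 - Polynomial.X : Polynomial ℤ) ^ A.card * (-1) ^ A.card *
        (-1) ^ T.card * Polynomial.X ^ (Mcon.rk Mcon.E - Mcon.rk T)) * hsq (Mcon.rk T)
end

section
/- The equivariant reduced characteristic polynomial satisfies (q−1)·χ̂_M(q) = (−1)^{rk(M)}·T̂_M(1−q, 0, q, 1), i.e. (−1)^{rk(M)}·T̂_M(1−q,0,q,1) = Σ_{S⊆E} q^{rk(M)−rk_M(S)} (−1)^{|S|} ∏_{e∉S}(1+t_e) ∏_{e∈S}(1+q·t_e). -/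
open Finset MvPolynomial

/-- (q−1)·χ̂_M(q) = (−1)^{rk(M)}·T̂_M(1−q,0,q,1), i.e.
(−1)^{rk(M)}·T̂_M(1−q,0,q,1) = Σ_{S⊆E} q^{rk(M)−rk_M(S)}(−1)^{|S|}∏_{e∉S}(1+t_e)∏_{e∈S}(1+q·t_e). -/
theorem eqTutte_charPoly_evaluation {α : Type} [DecidableEq α]
    (M : FinMatroid α) {R : Type} [CommRing R] (q : R) (t : α → R) :
    (-1) ^ (M.rk M.E) * M.eqTutte (1 - q) 0 q 1 t =
      ∑ S ∈ M.E.powerset,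
        q ^ (M.rk M.E - M.rk S) * (-1) ^ S.card *
          (∏ e ∈ M.E \ S, (1 + t e)) * (∏ e ∈ S, (1 + q * t e)) := by
  unfold FinMatroid.eqTutte
  rw [Finset.mul_sum]
  refine Finset.sum_congr rfl fun S hS => ?_
  rw [Finset.mem_powerset] at hS
  have h1 : M.rk S ≤ M.rk M.E := M.rk_mono hS
  have h2 : M.rk S ≤ S.card := M.rk_le_card S
  obtain ⟨a, ha⟩ : ∃ a, M.rk M.E = a + M.rk S := ⟨M.rk M.E - M.rk S, (Nat.sub_add_cancel h1).symm⟩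
  obtain ⟨b, hb⟩ : ∃ b, S.card = b + M.rk S := ⟨S.card - M.rk S, (Nat.sub_add_cancel h2).symm⟩
  have ha' : M.rk M.E - M.rk S = a := by omega
  have hb' : S.card - M.rk S = b := by omega
  rw [ha', hb', ha, hb]
  simp only [one_mul]
  have key : ((-1:R))^a * ((-1:R))^a = 1 := by
    rw [← pow_add, ← two_mul, pow_mul]; simp
  have e1 : (1 - q - 1 : R) = -q := by ring
  have e2 : (0 - 1 : R) = -1 := by ring
  rw [e1, e2, neg_pow q, pow_add, pow_add]
  linear_combination ((-1:R)^(M.rk S) * q^a * (-1:R)^b * (∏ e ∈ S, (1 + q * t e)) * (∏ e ∈ M.E \ S, (1 + t e))) * key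
end
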